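/- Let g = g₀ ⊕ g₁ be a Lie superalgebra over ℂ with [g₁,g₁]=0, (G,g) a Harish-Chandra pair, (H,h) a Harish-Chandra subpair with H closed in G. For p ≥ 0, an element s ∈ Hom(⋀^p(g₁), F_G(π^{-1}(U))) satisfies: s(X^r ∧ Ad_G(g)(Y^q))(gh) = 0 if q ≠ 0 and = s(X^r)(g) if q = 0 (for all g ∈ G, h ∈ H, X^r ∈ ⋀^r(g₁), Y^q ∈ ⋀^q(h₁), r+q=p) — if and only if s lies in the image of Υ ∘ Ψ ∘ Φ_{∧ψ}(⋀^p E^ψ), where ψ: H → GL((g₁/h₁)*) is given by [ψ(h)v](X+h₁) = v(Ad_G(h^{-1})(X)+h₁) and Υ(f)(Ad_G(g)(X))(g) = f(X̄)(g) with X̄ the image of X in ⋀(g₁/h₁). Equivalently, conditions (right-H-invariance of Koszul sections) and (pullback of sections of the homogeneous bundle ⋀^p E^ψ) define the same subsheaf of Hom(⋀^p(g₁), F_G). -/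
import Mathlib


open ExteriorAlgebra

private lemma mapmap {R M N P : Type*} [CommRing R] [AddCommGroup M] [AddCommGroup N]
    [AddCommGroup P] [Module R M] [Module R N] [Module R P]
    (f : M →ₗ[R] N) (g : N →ₗ[R] P) (x : ExteriorAlgebra R M) :
    ExteriorAlgebra.map g (ExteriorAlgebra.map f x) = ExteriorAlgebra.map (g ∘ₗ f) x :=
  DFunLike.congr_fun (ExteriorAlgebra.map_comp_map f g) x


set_option maxHeartbeats 1000000 in
/-- Equivalence of the two descriptions of the structure sheaf of `G/H` in the
Koszul construction: a linear map `s : ⋀(g₁) → F_G` satisfies the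
right-`H`-invariance conditions (5.2) of the paper — `s(x)(gh) = s(x)(g)` and
`s(x ∧ Ad_G(g)(ι(w) ∧ u))(gh) = 0` for `w ∈ h₁` — if and only if `s` comes,
via the maps `Υ ∘ Ψ ∘ Φ_{∧ψ}`, from an `ψ`-equivariant function `f` on `G`
with values in `⋀(g₁/h₁)*` (i.e. a section of the homogeneous bundle
`⋀E^ψ`). -/
theorem stmt_15 {G V : Type*} [Group G] [AddCommGroup V] [Module ℂ V]
    (H : Subgroup G) (W : Submodule ℂ V)
    (Ad : G →* (V ≃ₗ[ℂ] V))
    (hW : ∀ h : H, ∀ x ∈ W, Ad (h : G) x ∈ W)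
    (qmap : H → ((V ⧸ W) →ₗ[ℂ] (V ⧸ W)))
    (hqmap : ∀ (h : H) (x : V),
      qmap h (Submodule.Quotient.mk x) = Submodule.Quotient.mk (Ad ((h : G)⁻¹) x))
    (s : ExteriorAlgebra ℂ V →ₗ[ℂ] (G → ℂ)) :
    ((∀ (g : G) (h : H) (x : ExteriorAlgebra ℂ V), s x (g * (h : G)) = s x g) ∧
     (∀ (g : G) (h : H) (x : ExteriorAlgebra ℂ V) (w : V), w ∈ W →
       ∀ u : ExteriorAlgebra ℂ V,
        s (x * ExteriorAlgebra.map (Ad g).toLinearMap (ExteriorAlgebra.ι ℂ w * u))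
          (g * (h : G)) = 0))
    ↔
    (∃ f : ExteriorAlgebra ℂ (V ⧸ W) →ₗ[ℂ] (G → ℂ),
      (∀ (g : G) (h : H) (x : ExteriorAlgebra ℂ (V ⧸ W)),
        f (ExteriorAlgebra.map (qmap h) x) (g * (h : G)) = f x g) ∧
      (∀ (g : G) (x : ExteriorAlgebra ℂ V),
        s (ExteriorAlgebra.map (Ad g).toLinearMap x) g
          = f (ExteriorAlgebra.map W.mkQ x) g)) := by
  have hAdmul : ∀ g g' : G, (Ad g).toLinearMap ∘ₗ (Ad g').toLinearMap
      = (Ad (g * g')).toLinearMap := by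
    intro g g'
    ext v
    simp only [LinearMap.comp_apply, LinearEquiv.coe_coe, map_mul]
    rfl
  have mapinv : ∀ (g : G) (x : ExteriorAlgebra ℂ V),
      ExteriorAlgebra.map (Ad g).toLinearMap (ExteriorAlgebra.map (Ad g⁻¹).toLinearMap x)
        = x := by
    intro g x
    rw [mapmap, hAdmul, mul_inv_cancel, map_one]
    have : ((1 : V ≃ₗ[ℂ] V) : V →ₗ[ℂ] V) = LinearMap.id := rfl
    rw [this, map_id]
    rfl
  -- mkQ after Ad h (for h ∈ H) equals qmap h⁻¹ after mkQ
  have hq' : ∀ (h : H) (v : V),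
      W.mkQ ((Ad (h : G)) v) = qmap h⁻¹ (W.mkQ v) := by
    intro h v
    have := hqmap h⁻¹ v
    simpa using this.symm
  constructor
  · rintro ⟨h1, h2⟩
    obtain ⟨σ, hσ⟩ := W.mkQ.exists_rightInverse_of_surjective (by rw [Submodule.range_mkQ])
    set J : Submodule ℂ (ExteriorAlgebra ℂ V) := Submodule.span ℂ
      {z | ∃ (a : ExteriorAlgebra ℂ V) (w : V) (b : ExteriorAlgebra ℂ V),
        w ∈ W ∧ z = a * ExteriorAlgebra.ι ℂ w * b} with hJ
    have hmem : ∀ (a : ExteriorAlgebra ℂ V) (w : V) (b : ExteriorAlgebra ℂ V),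
        w ∈ W → a * ExteriorAlgebra.ι ℂ w * b ∈ J := fun a w b hw =>
      Submodule.subset_span ⟨a, w, b, hw, rfl⟩
    have hmulJ : ∀ (c : ExteriorAlgebra ℂ V), ∀ z ∈ J, c * z ∈ J ∧ z * c ∈ J := by
      intro c z hz
      induction hz using Submodule.span_induction with
      | mem z hz =>
        obtain ⟨a, w, b, hw, rfl⟩ := hz
        constructor
        · simpa [mul_assoc] using hmem (c * a) w b hw
        · simpa [mul_assoc] using hmem a w (b * c) hw
      | zero => simp
      | add x y _ _ hx hy =>
        exact ⟨by simpa [mul_add] using J.add_mem hx.1 hy.1,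
          by simpa [add_mul] using J.add_mem hx.2 hy.2⟩
      | smul r x _ hx =>
        exact ⟨by simpa [mul_smul_comm] using J.smul_mem r hx.1,
          by simpa [smul_mul_assoc] using J.smul_mem r hx.2⟩
    have hvan : ∀ (g : G), ∀ z ∈ J,
        s (ExteriorAlgebra.map (Ad g).toLinearMap z) g = 0 := by
      intro g z hz
      induction hz using Submodule.span_induction with
      | mem z hz =>
        obtain ⟨a, w, b, hw, rfl⟩ := hz
        have := h2 g 1 (ExteriorAlgebra.map (Ad g).toLinearMap a) w hw b
        simpa [map_mul, mul_assoc] using this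
      | zero => simp
      | add x y _ _ hx hy => simp [map_add, hx, hy]
      | smul r x _ hx => simp [map_smul, hx]
    have hπW : ∀ v : V, v - σ (W.mkQ v) ∈ W := by
      intro v
      rw [← Submodule.Quotient.mk_eq_zero W]
      have h0 : W.mkQ (v - σ (W.mkQ v)) = 0 := by
        rw [map_sub]
        have : W.mkQ (σ (W.mkQ v)) = W.mkQ v := DFunLike.congr_fun hσ (W.mkQ v)
        rw [this, sub_self]
      simpa using h0
    have hkey : ∀ x : ExteriorAlgebra ℂ V,
        x - ExteriorAlgebra.map (σ ∘ₗ W.mkQ) x ∈ J := by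
      intro x
      induction x using ExteriorAlgebra.induction with
      | algebraMap r => simp [AlgHom.commutes]
      | ι v =>
        rw [map_apply_ι, ← map_sub]
        simpa using hmem 1 (v - σ (W.mkQ v)) 1 (hπW v)
      | mul a b ha hb =>
        have heq : a * b - ExteriorAlgebra.map (σ ∘ₗ W.mkQ) (a * b)
            = a * (b - ExteriorAlgebra.map (σ ∘ₗ W.mkQ) b)
              + (a - ExteriorAlgebra.map (σ ∘ₗ W.mkQ) a)
                * ExteriorAlgebra.map (σ ∘ₗ W.mkQ) b := by
          rw [map_mul]; noncomm_ring
        rw [heq]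
        exact J.add_mem ((hmulJ a _ hb).1)
          ((hmulJ (ExteriorAlgebra.map (σ ∘ₗ W.mkQ) b) _ ha).2)
      | add a b ha hb =>
        have heq : a + b - ExteriorAlgebra.map (σ ∘ₗ W.mkQ) (a + b)
            = (a - ExteriorAlgebra.map (σ ∘ₗ W.mkQ) a)
              + (b - ExteriorAlgebra.map (σ ∘ₗ W.mkQ) b) := by
          rw [map_add]; abel
        rw [heq]; exact J.add_mem ha hb
    have hseq : ∀ (g : G) (x y : ExteriorAlgebra ℂ V),
        ExteriorAlgebra.map W.mkQ x = ExteriorAlgebra.map W.mkQ y →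
        s (ExteriorAlgebra.map (Ad g).toLinearMap x) g
          = s (ExteriorAlgebra.map (Ad g).toLinearMap y) g := by
      intro g x y hxy
      have hd : x - y ∈ J := by
        have hπ2 : ExteriorAlgebra.map (σ ∘ₗ W.mkQ) x
            = ExteriorAlgebra.map (σ ∘ₗ W.mkQ) y := by
          rw [← mapmap, ← mapmap, hxy]
        have heq : x - y = (x - ExteriorAlgebra.map (σ ∘ₗ W.mkQ) x)
            - (y - ExteriorAlgebra.map (σ ∘ₗ W.mkQ) y) := by
          rw [hπ2]; abel
        rw [heq]; exact J.sub_mem (hkey x) (hkey y)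
      have h0 := hvan g _ hd
      rw [map_sub, map_sub, Pi.sub_apply, sub_eq_zero] at h0
      exact h0
    refine ⟨{
      toFun := fun y g => s (ExteriorAlgebra.map (Ad g).toLinearMap
        (ExteriorAlgebra.map σ y)) g
      map_add' := by intro a b; funext g; simp [map_add]
      map_smul' := by intro r a; funext g; simp [map_smul] }, ?_, ?_⟩
    · intro g h y
      simp only [LinearMap.coe_mk, AddHom.coe_mk]
      rw [h1 (g := g) (h := h)]
      have hsplit : ExteriorAlgebra.map (Ad (g * (h : G))).toLinearMap
          (ExteriorAlgebra.map σ (ExteriorAlgebra.map (qmap h) y))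
          = ExteriorAlgebra.map (Ad g).toLinearMap
            (ExteriorAlgebra.map (Ad (h : G)).toLinearMap
              (ExteriorAlgebra.map σ (ExteriorAlgebra.map (qmap h) y))) := by
        rw [mapmap (f := (Ad (h : G)).toLinearMap) (g := (Ad g).toLinearMap), hAdmul]
      rw [hsplit]
      refine hseq g _ _ ?_
      have hLM : (W.mkQ ∘ₗ (Ad (h : G)).toLinearMap ∘ₗ σ ∘ₗ qmap h :
          (V ⧸ W) →ₗ[ℂ] V ⧸ W) = W.mkQ ∘ₗ σ := by
        apply LinearMap.ext
        intro v
        obtain ⟨x, rfl⟩ := Submodule.Quotient.mk_surjective W v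
        simp only [LinearMap.comp_apply, LinearEquiv.coe_coe]
        have e1 : qmap h (Submodule.Quotient.mk x)
            = Submodule.Quotient.mk ((Ad ((h : G))⁻¹) x) := hqmap h x
        rw [e1]
        have e2 : W.mkQ (σ (Submodule.Quotient.mk ((Ad ((h : G))⁻¹) x)))
            = Submodule.Quotient.mk ((Ad ((h : G))⁻¹) x) :=
          DFunLike.congr_fun hσ _
        have e3 : W.mkQ ((Ad (h : G)) (σ (Submodule.Quotient.mk ((Ad ((h : G))⁻¹) x))))
            = qmap h⁻¹ (W.mkQ (σ (Submodule.Quotient.mk ((Ad ((h : G))⁻¹) x)))) := hq' h _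
        rw [e3, e2]
        have e4 : qmap h⁻¹ (Submodule.Quotient.mk ((Ad ((h : G))⁻¹) x))
            = Submodule.Quotient.mk ((Ad (((h⁻¹ : H) : G))⁻¹) ((Ad ((h : G))⁻¹) x)) :=
          hqmap h⁻¹ _
        rw [e4]
        have e5 : (Ad (((h⁻¹ : H) : G))⁻¹) ((Ad ((h : G))⁻¹) x) = x := by
          have hpt : (Ad (((h⁻¹ : H) : G))⁻¹) ((Ad ((h : G))⁻¹) x)
              = (Ad ((((h⁻¹ : H) : G))⁻¹ * ((h : G))⁻¹)) x := by
            rw [map_mul]; rfl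
          rw [hpt]
          norm_num
        rw [e5]
        have e6 : W.mkQ (σ (Submodule.Quotient.mk x)) = Submodule.Quotient.mk x :=
          DFunLike.congr_fun hσ _
        rw [e6]
      rw [mapmap (qmap h) σ,
        mapmap (σ ∘ₗ qmap h) (Ad (h : G)).toLinearMap,
        mapmap ((Ad (h : G)).toLinearMap ∘ₗ σ ∘ₗ qmap h) W.mkQ,
        mapmap σ W.mkQ, hLM]
    · intro g x
      simp only [LinearMap.coe_mk, AddHom.coe_mk]
      refine hseq g _ _ ?_
      rw [mapmap, hσ, map_id]
      rfl
  · rintro ⟨f, hf1, hf2⟩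
    have hs : ∀ (g : G) (y : ExteriorAlgebra ℂ V),
        s y g = f (ExteriorAlgebra.map W.mkQ
          (ExteriorAlgebra.map (Ad g⁻¹).toLinearMap y)) g := by
      intro g y
      conv_lhs => rw [← mapinv g y]
      exact hf2 g _
    have hA : ∀ (g : G) (h : H) (x : ExteriorAlgebra ℂ V),
        s x (g * (h : G)) = s x g := by
      intro g h x
      rw [hs (g * h) x, hs g x]
      have hLM2 : (W.mkQ ∘ₗ (Ad (g * (h : G))⁻¹).toLinearMap : V →ₗ[ℂ] V ⧸ W)
          = qmap h ∘ₗ W.mkQ ∘ₗ (Ad g⁻¹).toLinearMap := by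
        apply LinearMap.ext
        intro v
        simp only [LinearMap.comp_apply, LinearEquiv.coe_coe]
        rw [mul_inv_rev, map_mul]
        have e0 : (Ad ((h : G))⁻¹ * Ad g⁻¹) v = (Ad ((h : G))⁻¹) ((Ad g⁻¹) v) := rfl
        rw [e0]
        have e1 : W.mkQ ((Ad ((h : G))⁻¹) ((Ad g⁻¹) v))
            = Submodule.Quotient.mk ((Ad ((h : G))⁻¹) ((Ad g⁻¹) v)) := rfl
        rw [e1, ← hqmap h ((Ad g⁻¹) v)]
        rfl
      have hcomm : ExteriorAlgebra.map W.mkQ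
          (ExteriorAlgebra.map (Ad (g * (h : G))⁻¹).toLinearMap x)
          = ExteriorAlgebra.map (qmap h)
            (ExteriorAlgebra.map W.mkQ
              (ExteriorAlgebra.map (Ad g⁻¹).toLinearMap x)) := by
        rw [mapmap (Ad (g * (h : G))⁻¹).toLinearMap W.mkQ,
          mapmap (Ad g⁻¹).toLinearMap W.mkQ,
          mapmap (W.mkQ ∘ₗ (Ad g⁻¹).toLinearMap) (qmap h), hLM2]
      rw [hcomm, hf1]
    refine ⟨hA, ?_⟩
    intro g h x w hw u
    rw [hA g h]
    rw [hs g]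
    have hz : ExteriorAlgebra.map W.mkQ
        (ExteriorAlgebra.map (Ad g⁻¹).toLinearMap
          (x * ExteriorAlgebra.map (Ad g).toLinearMap (ExteriorAlgebra.ι ℂ w * u))) = 0 := by
      rw [map_mul]
      have hinv : ExteriorAlgebra.map (Ad g⁻¹).toLinearMap
          (ExteriorAlgebra.map (Ad g).toLinearMap (ExteriorAlgebra.ι ℂ w * u))
          = ExteriorAlgebra.ι ℂ w * u := by
        have := mapinv g⁻¹ (ExteriorAlgebra.ι ℂ w * u)
        rwa [inv_inv] at this
      rw [hinv, map_mul, map_mul, map_apply_ι]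
      have hw0 : W.mkQ w = 0 := by
        rwa [Submodule.mkQ_apply, Submodule.Quotient.mk_eq_zero]
      rw [hw0, map_zero, zero_mul, mul_zero]
    rw [hz, map_zero]
    rfl
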